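/- Let X be a set of size n, and choose M subsets S_1, ..., S_M of X, each of size k, independently and uniformly at random (each S_i uniform over all k-element subsets). Let p ≤ k, and let A be the event that every p-element subset of X is contained in at least one S_i. Then P(A) ≥ 1 - C(n,p) · (1 - ((k-p+1)/(n-p+1))^p)^M. -/

import Mathlib

open scoped Classical
open Finset

lemma step_ineq (p k n : ℕ) (hpk : p + 1 ≤ k) (hkn : k ≤ n) :
    (k - p) * n.choose k ≤ (n - p) * (n - 1).choose (k - 1) := by
  have hk1 : 1 ≤ k := le_trans (Nat.le_add_left 1 p) hpk
  have hn1 : 1 ≤ n := le_trans hk1 hkn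
  have hkn0 : 0 < k * n := Nat.mul_pos hk1 hn1
  refine Nat.le_of_mul_le_mul_right ?_ hkn0
  have hid : k * n.choose k = n * (n - 1).choose (k - 1) := by
    have h := Nat.add_one_mul_choose_eq (n - 1) (k - 1)
    have e1 : n - 1 + 1 = n := by omega
    have e2 : k - 1 + 1 = k := by omega
    rw [e1, e2] at h
    rw [mul_comm k, ← h]
  calc (k - p) * n.choose k * (k * n)
      = (k - p) * n * (k * n.choose k) := by ring
    _ = (k - p) * n * (n * (n-1).choose (k-1)) := by rw [hid]
    _ ≤ (n - p) * k * (n * (n-1).choose (k-1)) := by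
        refine Nat.mul_le_mul_right _ ?_
        rw [Nat.sub_mul, Nat.sub_mul]
        have h1 : p*k ≤ p*n := Nat.mul_le_mul_left p hkn
        have h2 : k*n ≤ n*k := le_of_eq (mul_comm k n)
        have h3 : n*k ≤ k*n := le_of_eq (mul_comm n k)
        omega
    _ = (n - p) * (n-1).choose (k-1) * (k * n) := by ring

lemma choose_ratio (p k n : ℕ) (hpk : p ≤ k) (hkn : k ≤ n) :
    (k - p + 1)^p * n.choose k ≤ (n - p + 1)^p * (n - p).choose (k - p) := by
  induction p generalizing k n with
  | zero => simp
  | succ p ih =>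
    have e1 : k - (p+1) + 1 = k - p := by omega
    have e2 : n - (p+1) + 1 = n - p := by omega
    have e3 : k - (p+1) = (k-1) - p := by omega
    have e4 : n - (p+1) = (n-1) - p := by omega
    have e5 : (k-1) - p + 1 = k - p := by omega
    have e6 : (n-1) - p + 1 = n - p := by omega
    have ihh := ih (k-1) (n-1) (by omega) (by omega)
    rw [e5, e6] at ihh
    rw [e1, e2, e3, e4, pow_succ, pow_succ]
    calc (k-p)^p * (k-p) * n.choose k
        = (k-p)^p * ((k-p) * n.choose k) := by ring
      _ ≤ (k-p)^p * ((n-p) * (n-1).choose (k-1)) :=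
          Nat.mul_le_mul_left _ (step_ineq p k n hpk hkn)
      _ = (n-p) * ((k-p)^p * (n-1).choose (k-1)) := by ring
      _ ≤ (n-p) * ((n-p)^p * ((n-1)-p).choose ((k-1)-p)) := Nat.mul_le_mul_left _ ihh
      _ = (n-p)^p * (n-p) * ((n-1)-p).choose ((k-1)-p) := by ring

lemma count_supersets {X : Type*} [Fintype X] [DecidableEq X] (n k p : ℕ)
    (hn : Fintype.card X = n) (hpk : p ≤ k) (T : Finset X) (hT : T.card = p) :
    (univ.filter (fun S : Finset X => S.card = k ∧ T ⊆ S)).card = (n-p).choose (k-p) := by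
  have hTc : (univ \ T).card = n - p := by
    rw [card_sdiff_of_subset (subset_univ T), card_univ, hn, hT]
  rw [← hTc, ← card_powersetCard (k-p) (univ \ T)]
  apply card_bij' (fun S _ => S \ T) (fun U _ => U ∪ T)
  · intro S hS
    simp only [mem_filter, mem_univ, true_and] at hS
    rw [mem_powersetCard]
    constructor
    · exact sdiff_subset_sdiff (subset_univ S) le_rfl
    · rw [card_sdiff_of_subset hS.2, hS.1, hT]
  · intro U hU
    rw [mem_powersetCard] at hU
    have hdisj : Disjoint U T := disjoint_of_subset_left hU.1 (sdiff_disjoint)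
    simp only [mem_filter, mem_univ, true_and]
    constructor
    · rw [card_union_of_disjoint hdisj, hU.2, hT]; omega
    · exact subset_union_right
  · intro S hS
    simp only [mem_filter, mem_univ, true_and] at hS
    exact sdiff_union_of_subset hS.2
  · intro U hU
    rw [mem_powersetCard] at hU
    have hdisj : Disjoint U T := disjoint_of_subset_left hU.1 (sdiff_disjoint)
    rw [union_sdiff_right, sdiff_eq_self_of_disjoint hdisj]

lemma card_pi_subtype {α : Type*} [Fintype α] (M : ℕ) (P : α → Prop) [DecidablePred P] :
    Fintype.card {f : Fin M → α // ∀ i, P (f i)} = (Fintype.card {a // P a}) ^ M := by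
  rw [Fintype.card_congr (Equiv.subtypePiEquivPi (p := fun _ : Fin M => P)),
    Fintype.card_fun, Fintype.card_fin]

set_option maxHeartbeats 1000000 in
/-- Choosing `M` independent uniformly random `k`-element subsets `S₁, …, S_M` of an
`n`-element set `X`, the probability that every `p`-element subset of `X` is contained
in some `Sᵢ` is at least `1 - C(n,p) (1 - ((k-p+1)/(n-p+1))^p)^M`. -/
theorem prob_cover (X : Type*) [Fintype X] (n k p M : ℕ)
    (hn : Fintype.card X = n) (hpk : p ≤ k) (hkn : k ≤ n) :
    ((Fintype.card {f : Fin M → {S : Finset X // S.card = k} //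
        ∀ T : Finset X, T.card = p → ∃ i, T ⊆ (f i).1} : ℝ) /
      (Fintype.card (Fin M → {S : Finset X // S.card = k}) : ℝ)) ≥
      1 - (n.choose p : ℝ) *
        (1 - (((k : ℝ) - p + 1) / ((n : ℝ) - p + 1)) ^ p) ^ M := by
  classical
  have hpn : p ≤ n := hpk.trans hkn
  set N := n.choose k with hNdef
  set c := (n - p).choose (k - p) with hcdef
  have hNpos : 0 < N := Nat.choose_pos hkn
  have hS : Fintype.card {S : Finset X // S.card = k} = N := by
    rw [Fintype.card_finset_len, hn]
  have hΩ : Fintype.card (Fin M → {S : Finset X // S.card = k}) = N ^ M := by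
    rw [Fintype.card_fun, hS, Fintype.card_fin]
  -- count of supersets of a fixed p-set
  have hcT : ∀ T : Finset X, T.card = p →
      Fintype.card {S : {S : Finset X // S.card = k} // T ⊆ S.1} = c := by
    intro T hT
    rw [Fintype.card_congr (Equiv.subtypeSubtypeEquivSubtypeInter _ _),
      Fintype.card_subtype]
    exact count_supersets n k p hn hpk T hT
  have hcleN : c ≤ N := by
    obtain ⟨T, -, hT⟩ := Finset.exists_subset_card_eq (by rw [card_univ, hn]; exact hpn :
      p ≤ (univ : Finset X).card)
    rw [← hcT T hT, ← hS]
    exact Fintype.card_subtype_le _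
  have hcompl : ∀ T : Finset X, T.card = p →
      Fintype.card {S : {S : Finset X // S.card = k} // ¬ T ⊆ S.1} = N - c := by
    intro T hT
    rw [Fintype.card_subtype_compl, hS, hcT T hT]
  -- union bound on the bad event
  have hbad : Fintype.card {f : Fin M → {S : Finset X // S.card = k} //
      ¬ ∀ T : Finset X, T.card = p → ∃ i, T ⊆ (f i).1} ≤ n.choose p * (N - c) ^ M := by
    rw [Fintype.card_subtype]
    calc (univ.filter fun f : Fin M → {S : Finset X // S.card = k} =>
            ¬ ∀ T : Finset X, T.card = p → ∃ i, T ⊆ (f i).1).card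
        ≤ ((univ.powersetCard p).biUnion fun T =>
            univ.filter fun f : Fin M → {S : Finset X // S.card = k} =>
              ∀ i, ¬ T ⊆ (f i).1).card := by
          apply card_le_card
          intro f hf
          simp only [mem_filter, mem_univ, true_and] at hf
          push_neg at hf
          obtain ⟨T, hT, hTf⟩ := hf
          simp only [mem_biUnion, mem_powersetCard_univ, mem_filter, mem_univ, true_and]
          exact ⟨T, hT, hTf⟩
      _ ≤ ∑ T ∈ univ.powersetCard p,
            (univ.filter fun f : Fin M → {S : Finset X // S.card = k} =>
              ∀ i, ¬ T ⊆ (f i).1).card := card_biUnion_le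
      _ ≤ ∑ _T ∈ univ.powersetCard p, (N - c) ^ M := by
          apply Finset.sum_le_sum
          intro T hT
          rw [mem_powersetCard_univ] at hT
          rw [← Fintype.card_subtype]
          have h := card_pi_subtype (M := M)
            (P := fun S : {S : Finset X // S.card = k} => ¬ T ⊆ S.1)
          rw [hcompl T hT] at h
          exact h.le
      _ = n.choose p * (N - c) ^ M := by
          rw [sum_const, card_powersetCard, card_univ, hn, smul_eq_mul]
  -- express good count
  set G := Fintype.card {f : Fin M → {S : Finset X // S.card = k} //
      ∀ T : Finset X, T.card = p → ∃ i, T ⊆ (f i).1} with hGdef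
  set B := Fintype.card {f : Fin M → {S : Finset X // S.card = k} //
      ¬ ∀ T : Finset X, T.card = p → ∃ i, T ⊆ (f i).1} with hBdef
  have hGB : G = N ^ M - B := by
    have h1 := Fintype.card_subtype_compl
      (fun f : Fin M → {S : Finset X // S.card = k} =>
        ∀ T : Finset X, T.card = p → ∃ i, T ⊆ (f i).1)
    have h2 : G ≤ Fintype.card (Fin M → {S : Finset X // S.card = k}) :=
      Fintype.card_subtype_le _
    rw [hΩ, ← hGdef, ← hBdef] at h1
    rw [hΩ] at h2
    rw [h1, Nat.sub_sub_self h2]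
  have hBle : B ≤ N ^ M := by
    have := Fintype.card_subtype_le
      (fun f : Fin M → {S : Finset X // S.card = k} =>
        ¬ ∀ T : Finset X, T.card = p → ∃ i, T ⊆ (f i).1)
    rwa [hΩ] at this
  rw [hΩ, hGB]
  -- now pure real arithmetic
  have hNr : (0:ℝ) < (N:ℝ) := by exact_mod_cast hNpos
  have hNMr : (0:ℝ) < (N:ℝ) ^ M := pow_pos hNr M
  set r : ℝ := ((k : ℝ) - p + 1) / ((n : ℝ) - p + 1) with hrdef
  have hdenpos : (0:ℝ) < (n : ℝ) - p + 1 := by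
    have : (p:ℝ) ≤ n := by exact_mod_cast hpn
    linarith
  have hrnn : 0 ≤ r := by
    apply div_nonneg _ hdenpos.le
    have : (p:ℝ) ≤ k := by exact_mod_cast hpk
    linarith
  have hrc : r ^ p ≤ (c:ℝ) / N := by
    have hnat := choose_ratio p k n hpk hkn
    have hcast : ((k:ℝ) - p + 1) ^ p * N ≤ ((n:ℝ) - p + 1) ^ p * c := by
      have := (Nat.cast_le (α := ℝ)).2 hnat
      push_cast [Nat.cast_sub hpk, Nat.cast_sub hpn] at this
      convert this using 2 <;> push_cast [Nat.cast_sub hpk, Nat.cast_sub hpn] <;> ring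
    rw [hrdef, div_pow, div_le_div_iff₀ (pow_pos hdenpos p) hNr]
    linarith [hcast]
  have hr1 : r ^ p ≤ 1 := by
    apply pow_le_one₀ hrnn
    rw [div_le_one hdenpos]
    have hk' : (k:ℝ) ≤ n := by exact_mod_cast hkn
    linarith
  have hNc : ((N - c : ℕ) : ℝ) = (N:ℝ) - c := by
    rw [Nat.cast_sub hcleN]
  have hrcN : r ^ p * (N:ℝ) ≤ (c:ℝ) := (le_div_iff₀ hNr).1 hrc
  have hfrac : ((N:ℝ) - c) / N ≤ 1 - r ^ p := by
    rw [div_le_iff₀ hNr]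
    nlinarith [hrcN]
  have hfracnn : (0:ℝ) ≤ ((N:ℝ) - c) / N := by
    apply div_nonneg _ hNr.le
    have : (c:ℝ) ≤ N := by exact_mod_cast hcleN
    linarith
  have hfracM : (((N:ℝ) - c) / N) ^ M ≤ (1 - r ^ p) ^ M :=
    pow_le_pow_left₀ hfracnn hfrac M
  have hBr : (B:ℝ) ≤ (n.choose p : ℝ) * ((N:ℝ) - c) ^ M := by
    have := (Nat.cast_le (α := ℝ)).2 hbad
    push_cast at this
    rwa [hNc] at this
  have hexp : ((N:ℝ) - c) ^ M = (((N:ℝ) - c) / N) ^ M * (N:ℝ) ^ M := by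
    rw [div_pow, div_mul_cancel₀]
    exact (pow_pos hNr M).ne'
  have hkey : (B:ℝ) ≤ (n.choose p : ℝ) * (1 - r ^ p) ^ M * (N:ℝ) ^ M := by
    calc (B:ℝ) ≤ (n.choose p : ℝ) * ((N:ℝ) - c) ^ M := hBr
      _ = (n.choose p : ℝ) * ((((N:ℝ) - c) / N) ^ M * (N:ℝ) ^ M) := by rw [← hexp]
      _ ≤ (n.choose p : ℝ) * ((1 - r ^ p) ^ M * (N:ℝ) ^ M) := by
          apply mul_le_mul_of_nonneg_left _ (Nat.cast_nonneg _)
          exact mul_le_mul_of_nonneg_right hfracM hNMr.le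
      _ = (n.choose p : ℝ) * (1 - r ^ p) ^ M * (N:ℝ) ^ M := by ring
  rw [ge_iff_le]
  have hcastG : ((N ^ M - B : ℕ) : ℝ) = (N:ℝ) ^ M - B := by
    push_cast [Nat.cast_sub hBle]
    ring
  rw [hcastG]
  have : ((N ^ M : ℕ) : ℝ) = (N:ℝ) ^ M := by push_cast; ring
  rw [this, le_div_iff₀ hNMr]
  nlinarith [hkey]
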